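/- Let 0 ≤ μ < 1 and let A ∈ ℝ^{R×R} be the symmetric Toeplitz matrix with entries A_{rs} = μ^{|r−s|}. Then every eigenvalue of A is at most (1+μ)/(1−μ), and consequently for any matrix Γ ∈ ℝ^{d×R}, Tr(Γ A Γᵀ) ≤ ((1+μ)/(1−μ))·Tr(Γ Γᵀ). -/

import Mathlib

open Finset

lemma myGeom_le (μ : ℝ) (hμ0 : 0 ≤ μ) (hμ1 : μ < 1) (n : ℕ) :
    ∑ j ∈ range n, μ ^ j ≤ 1 / (1 - μ) := by
  have h1 : 0 < 1 - μ := by linarith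
  rw [geom_sum_eq hμ1.ne n]
  have heq : (μ ^ n - 1) / (μ - 1) = (1 - μ ^ n) / (1 - μ) := by
    rw [div_eq_div_iff (sub_ne_zero.mpr hμ1.ne) h1.ne']
    ring
  rw [heq]
  gcongr
  nlinarith [pow_nonneg hμ0 n]

lemma row_sum_le (R : ℕ) (μ : ℝ) (hμ0 : 0 ≤ μ) (hμ1 : μ < 1) (r : Fin R) :
    ∑ s : Fin R, μ ^ ((r : ℤ) - (s : ℤ)).natAbs ≤ (1 + μ) / (1 - μ) := by
  have h1 : 0 < 1 - μ := by linarith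
  classical
  have hsplit := Finset.sum_filter_add_sum_filter_not Finset.univ
    (fun s : Fin R => (s : ℕ) ≤ (r : ℕ)) (fun s : Fin R => μ ^ ((r : ℤ) - (s : ℤ)).natAbs)
  have hle : ∑ s ∈ univ.filter (fun s : Fin R => (s : ℕ) ≤ (r : ℕ)),
      μ ^ ((r : ℤ) - (s : ℤ)).natAbs ≤ ∑ j ∈ range R, μ ^ j := by
    rw [show ∑ s ∈ univ.filter (fun s : Fin R => (s : ℕ) ≤ (r : ℕ)),
        μ ^ ((r : ℤ) - (s : ℤ)).natAbs
        = ∑ j ∈ (univ.filter (fun s : Fin R => (s : ℕ) ≤ (r : ℕ))).image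
            (fun s : Fin R => (r : ℕ) - (s : ℕ)), μ ^ j from ?_]
    · refine Finset.sum_le_sum_of_subset_of_nonneg ?_ (fun j _ _ => pow_nonneg hμ0 j)
      intro j hj
      simp only [mem_image, mem_filter, mem_univ, true_and] at hj
      obtain ⟨s, hs, rfl⟩ := hj
      exact mem_range.2 (lt_of_le_of_lt (Nat.sub_le _ _) r.isLt)
    · rw [Finset.sum_image]
      · refine Finset.sum_congr rfl fun s hs => ?_
        simp only [mem_filter, mem_univ, true_and] at hs
        congr 1
        omega
      · intro a ha b hb hab
        simp only [Finset.coe_filter, Finset.mem_coe, Set.mem_setOf_eq, mem_filter, mem_univ, true_and] at ha hb hab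
        exact Fin.ext (by omega)
  have hgt : ∑ s ∈ univ.filter (fun s : Fin R => ¬ (s : ℕ) ≤ (r : ℕ)),
      μ ^ ((r : ℤ) - (s : ℤ)).natAbs ≤ μ * ∑ j ∈ range R, μ ^ j := by
    rw [Finset.mul_sum]
    rw [show ∑ s ∈ univ.filter (fun s : Fin R => ¬ (s : ℕ) ≤ (r : ℕ)),
        μ ^ ((r : ℤ) - (s : ℤ)).natAbs
        = ∑ j ∈ (univ.filter (fun s : Fin R => ¬ (s : ℕ) ≤ (r : ℕ))).image
            (fun s : Fin R => (s : ℕ) - (r : ℕ) - 1), μ * μ ^ j from ?_]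
    · refine Finset.sum_le_sum_of_subset_of_nonneg ?_
        (fun j _ _ => mul_nonneg hμ0 (pow_nonneg hμ0 j))
      intro j hj
      simp only [mem_image, mem_filter, mem_univ, true_and] at hj
      obtain ⟨s, hs, rfl⟩ := hj
      exact mem_range.2 (by omega)
    · rw [Finset.sum_image]
      · refine Finset.sum_congr rfl fun s hs => ?_
        simp only [mem_filter, mem_univ, true_and] at hs
        rw [← pow_succ']
        congr 1
        omega
      · intro a ha b hb hab
        simp only [Finset.coe_filter, Finset.mem_coe, Set.mem_setOf_eq, mem_filter, mem_univ, true_and] at ha hb hab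
        exact Fin.ext (by omega)
  have hgeo := myGeom_le μ hμ0 hμ1 R
  have hμg : μ * ∑ j ∈ range R, μ ^ j ≤ μ * (1 / (1 - μ)) :=
    mul_le_mul_of_nonneg_left hgeo hμ0
  have hfin : (1:ℝ) / (1 - μ) + μ * (1 / (1 - μ)) = (1 + μ) / (1 - μ) := by
    field_simp
  have h2 := hle.trans hgeo
  have h3 := hgt.trans hμg
  linarith

lemma quad_le (R : ℕ) (μ : ℝ) (hμ0 : 0 ≤ μ) (hμ1 : μ < 1)
    (A : Matrix (Fin R) (Fin R) ℝ)
    (hA : ∀ r s : Fin R, A r s = μ ^ ((r : ℤ) - (s : ℤ)).natAbs)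
    (x : Fin R → ℝ) :
    ∑ r : Fin R, ∑ s : Fin R, A r s * x r * x s
      ≤ (1 + μ) / (1 - μ) * ∑ r : Fin R, x r ^ 2 := by
  have hApos : ∀ r s, 0 ≤ A r s := fun r s => by rw [hA]; exact pow_nonneg hμ0 _
  have hAsymm : ∀ r s, A r s = A s r := fun r s => by rw [hA, hA]; congr 1; omega
  have hrow : ∀ r : Fin R, ∑ s : Fin R, A r s ≤ (1 + μ) / (1 - μ) := fun r => by
    simpa only [hA] using row_sum_le R μ hμ0 hμ1 r
  have step1 : ∑ r : Fin R, ∑ s : Fin R, A r s * x r * x s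
      ≤ ∑ r : Fin R, ∑ s : Fin R, A r s * ((x r ^ 2 + x s ^ 2) / 2) := by
    refine Finset.sum_le_sum fun r _ => Finset.sum_le_sum fun s _ => ?_
    have h := hApos r s
    nlinarith [sq_nonneg (x r - x s)]
  refine step1.trans ?_
  have expand : ∑ r : Fin R, ∑ s : Fin R, A r s * ((x r ^ 2 + x s ^ 2) / 2)
      = (∑ r : Fin R, (x r ^ 2 / 2) * ∑ s : Fin R, A r s)
        + (∑ s : Fin R, (x s ^ 2 / 2) * ∑ r : Fin R, A s r) := by
    have : ∀ r s : Fin R, A r s * ((x r ^ 2 + x s ^ 2) / 2)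
        = (x r ^ 2 / 2) * A r s + (x s ^ 2 / 2) * A r s := fun r s => by ring
    simp_rw [this, Finset.sum_add_distrib, ← Finset.mul_sum]
    congr 1
    rw [Finset.sum_comm]
    refine Finset.sum_congr rfl fun s _ => ?_
    rw [← Finset.mul_sum]
    congr 1
    exact Finset.sum_congr rfl fun r _ => hAsymm r s
  rw [expand]
  have hsq : ∀ r : Fin R, (0:ℝ) ≤ x r ^ 2 / 2 := fun r => by positivity
  have b1 : ∑ r : Fin R, (x r ^ 2 / 2) * ∑ s : Fin R, A r s
      ≤ ∑ r : Fin R, (x r ^ 2 / 2) * ((1 + μ) / (1 - μ)) :=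
    Finset.sum_le_sum fun r _ => mul_le_mul_of_nonneg_left (hrow r) (hsq r)
  have b2 : ∑ s : Fin R, (x s ^ 2 / 2) * ∑ r : Fin R, A s r
      ≤ ∑ s : Fin R, (x s ^ 2 / 2) * ((1 + μ) / (1 - μ)) :=
    Finset.sum_le_sum fun s _ => mul_le_mul_of_nonneg_left (hrow s) (hsq s)
  have : ∑ r : Fin R, (x r ^ 2 / 2) * ((1 + μ) / (1 - μ))
      + ∑ s : Fin R, (x s ^ 2 / 2) * ((1 + μ) / (1 - μ))
      = (1 + μ) / (1 - μ) * ∑ r : Fin R, x r ^ 2 := by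
    rw [← Finset.sum_add_distrib, Finset.mul_sum]
    exact Finset.sum_congr rfl fun r _ => by ring
  linarith

/-- Spectral bound for the momentum Toeplitz matrix `A_{rs} = μ^{|r−s|}` with `0 ≤ μ < 1`:
every eigenvalue of `A` is at most `(1+μ)/(1−μ)`, and consequently
`Tr(Γ A Γᵀ) ≤ ((1+μ)/(1−μ)) Tr(Γ Γᵀ)` for every `Γ ∈ ℝ^{d×R}`. -/
theorem toeplitz_momentum_spectral_bound
    (R d : ℕ) (μ : ℝ) (hμ0 : 0 ≤ μ) (hμ1 : μ < 1)
    (A : Matrix (Fin R) (Fin R) ℝ)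
    (hA : ∀ r s : Fin R, A r s = μ ^ ((r : ℤ) - (s : ℤ)).natAbs) :
    (∀ t : ℝ, Module.End.HasEigenvalue (Matrix.toLin' A) t → t ≤ (1 + μ) / (1 - μ)) ∧
    ∀ Γ : Matrix (Fin d) (Fin R) ℝ,
      Matrix.trace (Γ * A * Γ.transpose)
        ≤ ((1 + μ) / (1 - μ)) * Matrix.trace (Γ * Γ.transpose) := by
  have hquad := quad_le R μ hμ0 hμ1 A hA
  constructor
  · intro t ht
    obtain ⟨v, hv⟩ := ht.exists_hasEigenvector
    have hv0 : v ≠ 0 := hv.right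
    have hmv : A.mulVec v = t • v := by
      simpa [Matrix.toLin'_apply] using hv.apply_eq_smul
    have hpos : 0 < ∑ r : Fin R, v r ^ 2 := by
      obtain ⟨r, hr⟩ := Function.ne_iff.mp hv0
      exact Finset.sum_pos' (fun s _ => sq_nonneg _)
        ⟨r, Finset.mem_univ r, (sq_nonneg _).lt_of_ne (Ne.symm (pow_ne_zero 2 hr))⟩
    have key : t * ∑ r : Fin R, v r ^ 2 = ∑ r : Fin R, ∑ s : Fin R, A r s * v r * v s := by
      have : ∀ r : Fin R, A.mulVec v r = t * v r := fun r => by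
        rw [hmv]; simp
      calc t * ∑ r : Fin R, v r ^ 2 = ∑ r : Fin R, (t * v r) * v r := by
            rw [Finset.mul_sum]; exact Finset.sum_congr rfl fun r _ => by ring
        _ = ∑ r : Fin R, A.mulVec v r * v r := by
            exact Finset.sum_congr rfl fun r _ => by rw [this r]
        _ = ∑ r : Fin R, ∑ s : Fin R, A r s * v r * v s := by
            refine Finset.sum_congr rfl fun r _ => ?_
            rw [Matrix.mulVec, dotProduct, Finset.sum_mul]
            exact Finset.sum_congr rfl fun s _ => by ring
    have hle : t * ∑ r : Fin R, v r ^ 2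
        ≤ (1 + μ) / (1 - μ) * ∑ r : Fin R, v r ^ 2 := key ▸ hquad v
    exact le_of_mul_le_mul_right (by simpa [mul_comm] using hle) hpos
  · intro Γ
    have tr1 : Matrix.trace (Γ * A * Γ.transpose)
        = ∑ i : Fin d, ∑ r : Fin R, ∑ s : Fin R, A r s * Γ i r * Γ i s := by
      simp only [Matrix.trace, Matrix.diag_apply, Matrix.mul_apply,
        Matrix.transpose_apply, Finset.sum_mul]
      refine Finset.sum_congr rfl fun i _ => ?_
      rw [Finset.sum_comm]
      exact Finset.sum_congr rfl fun r _ => Finset.sum_congr rfl fun s _ => by ring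
    have tr2 : Matrix.trace (Γ * Γ.transpose) = ∑ i : Fin d, ∑ r : Fin R, Γ i r ^ 2 := by
      simp [Matrix.trace, Matrix.mul_apply, sq]
    rw [tr1, tr2, Finset.mul_sum]
    exact Finset.sum_le_sum fun i _ => hquad (fun r => Γ i r)
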